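/- Let X_1,...,X_n be i.i.d. random variables taking values in [0,1] with mean mu, and let hat_mu = (1/n)*sum X_i. Then for any x > mu, P(hat_mu >= x) <= exp(-n*kl(x,mu)), where kl is the binary KL divergence. -/

import Mathlib

open MeasureTheory ProbabilityTheory Finset

private lemma exp_interp {a t : ℝ} (h0 : 0 ≤ a) (h1 : a ≤ 1) :
    Real.exp (t * a) ≤ 1 - a + a * Real.exp t := by
  have h := convexOn_exp.2 (Set.mem_univ (0:ℝ)) (Set.mem_univ t)
      (by linarith : (0:ℝ) ≤ 1 - a) h0 (by ring)
  simp only [smul_eq_mul, mul_zero, zero_add, Real.exp_zero, mul_one] at h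
  rw [mul_comm] at h
  linarith

theorem chernoff_kl_bound {Ω : Type*} [MeasurableSpace Ω] (P : Measure Ω)
    [IsProbabilityMeasure P] (n : ℕ) (hn : 0 < n) (X : ℕ → Ω → ℝ)
    (hmeas : ∀ i, Measurable (X i))
    (hindep : iIndepFun X P)
    (hident : ∀ i, P.map (X i) = P.map (X 0))
    (hbdd : ∀ i, ∀ᵐ ω ∂P, X i ω ∈ Set.Icc (0:ℝ) 1)
    (μ : ℝ) (hμ : μ ∈ Set.Ioo (0:ℝ) 1) (hmean : ∀ i, ∫ ω, X i ω ∂P = μ)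
    (x : ℝ) (hx : μ < x) :
    (P {ω | x ≤ (∑ i ∈ range n, X i ω) / n}).toReal ≤
      Real.exp (-(n : ℝ) * (x * Real.log (x / μ) + (1 - x) * Real.log ((1 - x) / (1 - μ)))) := by
  obtain ⟨hμ0, hμ1⟩ := hμ
  have hn' : (0:ℝ) < n := Nat.cast_pos.mpr hn
  have hset : {ω | x ≤ (∑ i ∈ range n, X i ω) / n}
      = {ω | x * n ≤ ∑ i ∈ range n, X i ω} := by
    ext ω; simp [Set.mem_setOf_eq, le_div_iff₀ hn']
  rw [hset]
  -- integrability facts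
  have hXint : ∀ i, Integrable (X i) P := by
    intro i
    refine ⟨(hmeas i).aestronglyMeasurable, HasFiniteIntegral.of_bounded (C := 1) ?_⟩
    filter_upwards [hbdd i] with ω hω
    rw [Real.norm_eq_abs, abs_le]; constructor <;> linarith [hω.1, hω.2]
  have hint : ∀ (t : ℝ) i, Integrable (fun ω => Real.exp (t * X i ω)) P := by
    intro t i
    refine ⟨((hmeas i).const_mul t).exp.aestronglyMeasurable,
      HasFiniteIntegral.of_bounded (C := Real.exp |t|) ?_⟩
    filter_upwards [hbdd i] with ω hω
    rw [Real.norm_eq_abs, abs_of_pos (Real.exp_pos _)]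
    apply Real.exp_le_exp.2
    calc t * X i ω ≤ |t| * X i ω := by
          apply mul_le_mul_of_nonneg_right (le_abs_self t) hω.1
      _ ≤ |t| * 1 := by apply mul_le_mul_of_nonneg_left hω.2 (abs_nonneg t)
      _ = |t| := mul_one _
  have hintsum : ∀ t : ℝ, Integrable (fun ω => Real.exp (t * ∑ i ∈ range n, X i ω)) P := by
    intro t
    have hbddall : ∀ᵐ ω ∂P, ∀ i, X i ω ∈ Set.Icc (0:ℝ) 1 := ae_all_iff.2 hbdd
    refine ⟨(Finset.measurable_sum _ fun i _ => hmeas i).const_mul t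
      |>.exp.aestronglyMeasurable,
      HasFiniteIntegral.of_bounded (C := Real.exp (|t| * n)) ?_⟩
    filter_upwards [hbddall] with ω hω
    rw [Real.norm_eq_abs, abs_of_pos (Real.exp_pos _)]
    apply Real.exp_le_exp.2
    have hsle : ∑ i ∈ range n, X i ω ≤ n := by
      calc ∑ i ∈ range n, X i ω ≤ ∑ i ∈ range n, (1:ℝ) :=
            Finset.sum_le_sum fun i _ => (hω i).2
        _ = n := by simp
    have hsge : 0 ≤ ∑ i ∈ range n, X i ω := Finset.sum_nonneg fun i _ => (hω i).1
    calc t * ∑ i ∈ range n, X i ω ≤ |t| * ∑ i ∈ range n, X i ω :=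
          mul_le_mul_of_nonneg_right (le_abs_self t) hsge
      _ ≤ |t| * n := mul_le_mul_of_nonneg_left hsle (abs_nonneg t)
  -- identical distribution: the mgf of each `X i` equals that of `X 0`
  have hmgf_eq : ∀ (t : ℝ) i, mgf (X i) P t = mgf (X 0) P t := by
    intro t i
    have h1 : mgf (X i) P t = ∫ y, Real.exp (t * y) ∂(P.map (X i)) := by
      rw [integral_map (hmeas i).aemeasurable
        (measurable_id'.const_mul t).exp.aestronglyMeasurable]
      rfl
    rw [h1, hident i, integral_map (hmeas 0).aemeasurable
      (measurable_id'.const_mul t).exp.aestronglyMeasurable]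
    rfl
  -- mgf bound from stochastic domination by Bernoulli(μ)
  have hmgf_le : ∀ t : ℝ, mgf (X 0) P t ≤ 1 - μ + μ * Real.exp t := by
    intro t
    have hle : mgf (X 0) P t ≤ ∫ ω, (1 - X 0 ω + X 0 ω * Real.exp t) ∂P := by
      refine integral_mono_ae (hint t 0)
        (((integrable_const (1:ℝ)).sub (hXint 0)).add ((hXint 0).mul_const _)) ?_
      filter_upwards [hbdd 0] with ω hω
      exact exp_interp hω.1 hω.2
    have heq : ∫ ω, (1 - X 0 ω + X 0 ω * Real.exp t) ∂P = 1 - μ + μ * Real.exp t := by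
      have hfun : (fun ω => 1 - X 0 ω + X 0 ω * Real.exp t)
          = fun ω => 1 + (Real.exp t - 1) * X 0 ω := by ext ω; ring
      rw [hfun, integral_add (integrable_const (1:ℝ)) ((hXint 0).const_mul _),
        integral_const_mul, hmean 0, integral_const]
      simp only [measure_univ, probReal_univ, ENNReal.toReal_one, smul_eq_mul, one_mul, mul_one]
      ring
    linarith
  have hmgf_nonneg : ∀ t : ℝ, 0 ≤ mgf (X 0) P t := fun t => mgf_nonneg
  -- core Chernoff bound for every t ≥ 0
  have core : ∀ t : ℝ, 0 ≤ t →
      (P {ω | x * n ≤ ∑ i ∈ range n, X i ω}).toReal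
        ≤ (Real.exp (-t * x) * (1 - μ + μ * Real.exp t)) ^ n := by
    intro t ht
    have h1 := measure_ge_le_exp_mul_mgf (μ := P) (X := fun ω => ∑ i ∈ range n, X i ω)
      (x * n) ht (hintsum t)
    have h2 : mgf (fun ω => ∑ i ∈ range n, X i ω) P t = (mgf (X 0) P t) ^ n := by
      have : (fun ω => ∑ i ∈ range n, X i ω) = ∑ i ∈ range n, X i := by
        ext ω; simp
      rw [this, hindep.mgf_sum hmeas]
      rw [Finset.prod_congr rfl fun i _ => hmgf_eq t i, Finset.prod_const, card_range]
    have h3 : Real.exp (-t * (x * n)) = (Real.exp (-t * x)) ^ n := by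
      rw [← Real.exp_nat_mul]; ring_nf
    calc (P {ω | x * n ≤ ∑ i ∈ range n, X i ω}).toReal
        ≤ Real.exp (-t * (x * n)) * mgf (fun ω => ∑ i ∈ range n, X i ω) P t := h1
      _ = (Real.exp (-t * x)) ^ n * (mgf (X 0) P t) ^ n := by rw [h2, h3]
      _ ≤ (Real.exp (-t * x)) ^ n * (1 - μ + μ * Real.exp t) ^ n := by
          apply mul_le_mul_of_nonneg_left
            (pow_le_pow_left₀ (hmgf_nonneg t) (hmgf_le t) n)
            (pow_nonneg (Real.exp_pos _).le n)
      _ = (Real.exp (-t * x) * (1 - μ + μ * Real.exp t)) ^ n := (mul_pow _ _ _).symm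
  rcases lt_trichotomy x 1 with hx1 | hx1 | hx1
  · -- main case μ < x < 1 : optimize t
    have hx0 : 0 < x := lt_trans hμ0 hx
    have h1x : 0 < 1 - x := by linarith
    have h1μ : 0 < 1 - μ := by linarith
    have harg : (1:ℝ) < x * (1 - μ) / (μ * (1 - x)) := by
      rw [lt_div_iff₀ (by positivity)]
      nlinarith
    set t := Real.log (x * (1 - μ) / (μ * (1 - x))) with htdef
    have ht0 : 0 ≤ t := Real.log_nonneg harg.le
    have hexpt : Real.exp t = x * (1 - μ) / (μ * (1 - x)) :=
      Real.exp_log (by positivity)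
    have hval : 1 - μ + μ * Real.exp t = (1 - μ) / (1 - x) := by
      rw [hexpt]; field_simp; try ring
    have hkey : Real.exp (-t * x) * (1 - μ + μ * Real.exp t)
        = Real.exp (-(x * Real.log (x / μ) + (1 - x) * Real.log ((1 - x) / (1 - μ)))) := by
      rw [hval]
      have h2 : (1 - μ) / (1 - x) = Real.exp (Real.log ((1 - μ) / (1 - x))) :=
        (Real.exp_log (by positivity)).symm
      rw [h2, ← Real.exp_add]
      congr 1
      have ht' : t = Real.log (x / μ) + Real.log ((1 - μ) / (1 - x)) := by
        rw [htdef, ← Real.log_mul (by positivity) (by positivity)]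
        congr 1; field_simp; try ring
      have hneg : Real.log ((1 - μ) / (1 - x)) = - Real.log ((1 - x) / (1 - μ)) := by
        rw [← Real.log_inv]; congr 1; field_simp
      rw [ht', hneg]; ring
    calc (P {ω | x * n ≤ ∑ i ∈ range n, X i ω}).toReal
        ≤ (Real.exp (-t * x) * (1 - μ + μ * Real.exp t)) ^ n := core t ht0
      _ = Real.exp (-(n:ℝ) * (x * Real.log (x / μ) + (1 - x) * Real.log ((1 - x) / (1 - μ)))) := by
          rw [hkey, ← Real.exp_nat_mul]
          congr 1
          ring
  · -- boundary case x = 1 : take the limit t → ∞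
    subst hx1
    have hlim : Filter.Tendsto (fun t : ℝ => ((1 - μ) * Real.exp (-t) + μ) ^ n)
        Filter.atTop (nhds (μ ^ n)) := by
      have h1 : Filter.Tendsto (fun t : ℝ => (1 - μ) * Real.exp (-t) + μ)
          Filter.atTop (nhds ((1 - μ) * 0 + μ)) :=
        (Real.tendsto_exp_neg_atTop_nhds_zero.const_mul _).add_const μ
      rw [mul_zero, zero_add] at h1
      exact h1.pow n
    have hev : ∀ᶠ t : ℝ in Filter.atTop,
        (P {ω | 1 * n ≤ ∑ i ∈ range n, X i ω}).toReal
          ≤ ((1 - μ) * Real.exp (-t) + μ) ^ n := by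
      filter_upwards [Filter.eventually_ge_atTop (0:ℝ)] with t ht
      have h := core t ht
      have hrw : Real.exp (-t * 1) * (1 - μ + μ * Real.exp t)
          = (1 - μ) * Real.exp (-t) + μ := by
        have h1 : Real.exp (-t) * Real.exp t = 1 := by
          rw [← Real.exp_add]; simp
        rw [mul_one]
        nlinarith [h1]
      rwa [hrw] at h
    have hles : (P {ω | 1 * n ≤ ∑ i ∈ range n, X i ω}).toReal ≤ μ ^ n :=
      ge_of_tendsto hlim hev
    have hrhs : Real.exp (-(n:ℝ) * (1 * Real.log (1 / μ) + (1 - 1) * Real.log ((1 - 1) / (1 - μ))))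
        = μ ^ n := by
      rw [one_mul, sub_self, zero_mul, add_zero, Real.log_div one_ne_zero hμ0.ne',
        Real.log_one]
      rw [show -(n:ℝ) * (0 - Real.log μ) = (n:ℝ) * Real.log μ by ring,
        Real.exp_nat_mul, Real.exp_log hμ0]
    rw [hrhs]
    exact hles
  · -- trivial case x > 1 : the event is null
    have hnull : P {ω | x * n ≤ ∑ i ∈ range n, X i ω} = 0 := by
      rw [measure_eq_zero_iff_ae_notMem]
      filter_upwards [ae_all_iff.2 hbdd] with ω hω
      simp only [Set.mem_setOf_eq, not_le]
      have hsle : ∑ i ∈ range n, X i ω ≤ n := by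
        calc ∑ i ∈ range n, X i ω ≤ ∑ i ∈ range n, (1:ℝ) :=
              Finset.sum_le_sum fun i _ => (hω i).2
          _ = n := by simp
      nlinarith
    rw [hnull]
    simp only [ENNReal.toReal_zero]
    positivity
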